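/- arXiv:2110.14432 — 9 statements merged into one kernel-verified Lean document; each statement's English description precedes it below -/
import Mathlib

section
/- Teaching monotonicity (Proposition 1). Let E be a finite-dimensional real inner product space, w* ∈ E, η > 0, and for each index i ∈ Fin n and each label y in a nonempty label set Y let ℓ_i(y, ·) : E → ℝ be differentiable. Define G(i, y, w) = ‖w − η ∇_w ℓ_i(y, w) − w*‖². Let ỹ_i ∈ Y be the ground-truth labels and suppose there is a greedy label selection y* : Fin n × E → Y with G(i, y*(i, w), w) ≤ G(i, y, w) for all i, y, w. Let I_0, I_1, … be i.i.d. uniform random indices on Fin n, and from a common deterministic initialization w^0 define the LAST iterates w_l^{t+1} = w_l^t − η ∇_w ℓ_{I_t}(y*(I_t, w_l^t), w_l^t) and the SGD iterates w_s^{t+1} = w_s^t − η ∇_w ℓ_{I_t}(ỹ_{I_t}, w_s^t). Assume the monotonicity condition: for every t and every pair of random vectors W_1, W_2 that are measurable functions of the first t indices, if E‖W_1 − w*‖² ≤ E‖W_2 − w*‖² then E[G(I, ỹ_I, W_1)] ≤ E[G(I, ỹ_I, W_2)], where I is a fresh uniform index independent of the first t indices. Then for every T ≥ 0, E‖w_l^T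 − w*‖² ≤ E‖w_s^T − w*‖², i.e., in expectation the greedy LAST teacher converges to w* no slower than the random (SGD) teacher. -/
open scoped BigOperators RealInnerProductSpace

/-- **Teaching monotonicity (Proposition 1).** The greedy LAST teacher, which at each
iteration feeds a randomly drawn example with a label minimizing the one-step discrepancy
`G i y w = ‖w − η ∇ℓ_i(y, ·)(w) − w*‖²`, converges (in expectation over the i.i.d. uniform
indices, here encoded as the uniform average over index sequences `σ : Fin T → Fin n`)
to `w*` no slower than the random (SGD) teacher feeding the ground-truth labels,
provided the monotonicity condition on `G` holds. -/
theorem teaching_monotonicity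
    {E : Type*} [NormedAddCommGroup E] [InnerProductSpace ℝ E] [FiniteDimensional ℝ E]
    {Y : Type*} [Nonempty Y]
    (n : ℕ) (hn : 0 < n)
    (ℓ : Fin n → Y → E → ℝ)
    (hdiff : ∀ i y, Differentiable ℝ (ℓ i y))
    (η : ℝ) (hη : 0 < η)
    (wstar w0 : E)
    (G : Fin n → Y → E → ℝ)
    (hG : ∀ i y w, G i y w = ‖w - η • gradient (ℓ i y) w - wstar‖ ^ 2)
    (ytil : Fin n → Y)
    (ystar : Fin n → E → Y)
    (hgreedy : ∀ i w y, G i (ystar i w) w ≤ G i y w)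
    (wl ws : ∀ T : ℕ, (Fin T → Fin n) → E)
    (hwl0 : ∀ σ : Fin 0 → Fin n, wl 0 σ = w0)
    (hws0 : ∀ σ : Fin 0 → Fin n, ws 0 σ = w0)
    (hwlS : ∀ (T : ℕ) (σ : Fin (T + 1) → Fin n),
      wl (T + 1) σ =
        wl T (fun t => σ t.castSucc) -
          η • gradient
            (ℓ (σ (Fin.last T)) (ystar (σ (Fin.last T)) (wl T (fun t => σ t.castSucc))))
            (wl T (fun t => σ t.castSucc)))
    (hwsS : ∀ (T : ℕ) (σ : Fin (T + 1) → Fin n),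
      ws (T + 1) σ =
        ws T (fun t => σ t.castSucc) -
          η • gradient (ℓ (σ (Fin.last T)) (ytil (σ (Fin.last T))))
            (ws T (fun t => σ t.castSucc)))
    (hmono : ∀ (t : ℕ) (W₁ W₂ : (Fin t → Fin n) → E),
      (∑ σ : Fin t → Fin n, ‖W₁ σ - wstar‖ ^ 2) / (n : ℝ) ^ t ≤
          (∑ σ : Fin t → Fin n, ‖W₂ σ - wstar‖ ^ 2) / (n : ℝ) ^ t →
        (∑ σ : Fin t → Fin n, ∑ i : Fin n, G i (ytil i) (W₁ σ)) / ((n : ℝ) ^ t * n) ≤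
          (∑ σ : Fin t → Fin n, ∑ i : Fin n, G i (ytil i) (W₂ σ)) / ((n : ℝ) ^ t * n)) :
    ∀ T : ℕ,
      (∑ σ : Fin T → Fin n, ‖wl T σ - wstar‖ ^ 2) / (n : ℝ) ^ T ≤
        (∑ σ : Fin T → Fin n, ‖ws T σ - wstar‖ ^ 2) / (n : ℝ) ^ T := by

  intro T
  induction T with
  | zero => simp [hwl0, hws0]
  | succ T ih =>
    have hnR : (0:ℝ) < n := by exact_mod_cast hn
    have hd : (0:ℝ) < (n:ℝ) ^ T * n := mul_pos (pow_pos hnR T) hnR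
    let e : ((Fin T → Fin n) × Fin n) ≃ (Fin (T+1) → Fin n) :=
      { toFun := fun p => Fin.snoc p.1 p.2
        invFun := fun σ => (fun t => σ t.castSucc, σ (Fin.last T))
        left_inv := fun p => by simp
        right_inv := fun σ => by
          funext t
          refine Fin.lastCases ?_ ?_ t <;> simp }
    have hsuml : ∑ σ : Fin (T+1) → Fin n, ‖wl (T+1) σ - wstar‖ ^ 2
        = ∑ σ : Fin T → Fin n, ∑ i : Fin n, G i (ystar i (wl T σ)) (wl T σ) := by
      rw [← e.sum_comp (fun σ => ‖wl (T+1) σ - wstar‖^2), Fintype.sum_prod_type]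
      refine Finset.sum_congr rfl fun σ _ => Finset.sum_congr rfl fun i _ => ?_
      have h1 : (fun t : Fin T => (Fin.snoc σ i : Fin (T+1) → Fin n) t.castSucc) = σ := by
        funext t; simp
      rw [hG, hwlS]
      simp [e, h1]
    have hsums : ∑ σ : Fin (T+1) → Fin n, ‖ws (T+1) σ - wstar‖ ^ 2
        = ∑ σ : Fin T → Fin n, ∑ i : Fin n, G i (ytil i) (ws T σ) := by
      rw [← e.sum_comp (fun σ => ‖ws (T+1) σ - wstar‖^2), Fintype.sum_prod_type]
      refine Finset.sum_congr rfl fun σ _ => Finset.sum_congr rfl fun i _ => ?_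
      have h1 : (fun t : Fin T => (Fin.snoc σ i : Fin (T+1) → Fin n) t.castSucc) = σ := by
        funext t; simp
      rw [hG, hwsS]
      simp [e, h1]
    have hstep : ∑ σ : Fin T → Fin n, ∑ i : Fin n, G i (ystar i (wl T σ)) (wl T σ)
        ≤ ∑ σ : Fin T → Fin n, ∑ i : Fin n, G i (ytil i) (wl T σ) := by
      refine Finset.sum_le_sum fun σ _ => Finset.sum_le_sum fun i _ => ?_
      exact hgreedy i (wl T σ) (ytil i)
    have hkey := hmono T (wl T) (ws T) ih
    rw [hsuml, hsums, pow_succ]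
    calc (∑ σ : Fin T → Fin n, ∑ i : Fin n, G i (ystar i (wl T σ)) (wl T σ)) / ((n:ℝ)^T * n)
        ≤ (∑ σ : Fin T → Fin n, ∑ i : Fin n, G i (ytil i) (wl T σ)) / ((n:ℝ)^T * n) := by
          gcongr
      _ ≤ _ := hkey
end

section
/- One-step contraction for greedy label-rescaled gradient steps (key step of Theorem 1). Let E be a finite-dimensional real inner product space and ℓ : E → ℝ a differentiable function that is order-1 μ-strongly convex with μ ≥ 0, i.e. ℓ(v) ≥ ℓ(u) + ⟨∇ℓ(u), v − u⟩ + (μ/2)‖v − u‖ for all u, v ∈ E. Let w, w* ∈ E satisfy ℓ(w*) ≤ ℓ(w), let ‖∇ℓ(w)‖ ≤ L, and let η > 0 and c_1 > 0. Then the rescaled gradient step w⁺ = w − η c_1 ‖w − w*‖ ∇ℓ(w) satisfies ‖w⁺ − w*‖² ≤ (1 − μ η c_1 + η² c_1² L²) ‖w − w*‖². -/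
open scoped RealInnerProductSpace

/-- **One-step contraction for greedy label-rescaled gradient steps (key step of Theorem 1).**
For an order-1 `μ`-strongly convex differentiable loss `ℓ` with `ℓ(w*) ≤ ℓ(w)` and
`‖∇ℓ(w)‖ ≤ L`, the rescaled gradient step `w⁺ = w − η c₁ ‖w − w*‖ ∇ℓ(w)` satisfies
`‖w⁺ − w*‖² ≤ (1 − μ η c₁ + η² c₁² L²) ‖w − w*‖²`. -/
theorem one_step_contraction_greedy_last
    {E : Type*} [NormedAddCommGroup E] [InnerProductSpace ℝ E] [FiniteDimensional ℝ E]
    (ℓ : E → ℝ) (hdiff : Differentiable ℝ ℓ)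
    (μ : ℝ) (hμ : 0 ≤ μ)
    (hsc : ∀ u v : E, ℓ v ≥ ℓ u + ⟪gradient ℓ u, v - u⟫ + (μ / 2) * ‖v - u‖)
    (w wstar : E) (hws : ℓ wstar ≤ ℓ w)
    (L : ℝ) (hL : ‖gradient ℓ w‖ ≤ L)
    (η c₁ : ℝ) (hη : 0 < η) (hc₁ : 0 < c₁) :
    ‖(w - (η * c₁ * ‖w - wstar‖) • gradient ℓ w) - wstar‖ ^ 2 ≤
      (1 - μ * η * c₁ + η ^ 2 * c₁ ^ 2 * L ^ 2) * ‖w - wstar‖ ^ 2 := by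
  set g := gradient ℓ w with hg
  set r := ‖w - wstar‖ with hr
  have hr0 : 0 ≤ r := norm_nonneg _
  have hL0 : 0 ≤ L := le_trans (norm_nonneg g) hL
  -- inner product lower bound from strong convexity
  have hsc' := hsc w wstar
  have hinner : ⟪g, w - wstar⟫ ≥ (μ / 2) * r := by
    have h1 : ⟪g, wstar - w⟫ = -⟪g, w - wstar⟫ := by
      rw [← inner_neg_right, neg_sub]
    have h2 : ‖wstar - w‖ = r := by rw [hr, norm_sub_rev]
    rw [h1, h2] at hsc'
    linarith
  set s := η * c₁ * r with hs
  have hs0 : 0 ≤ s := by positivity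
  have key : ‖(w - wstar) - s • g‖ ^ 2
      = r ^ 2 - 2 * s * ⟪g, w - wstar⟫ + s ^ 2 * ‖g‖ ^ 2 := by
    rw [norm_sub_sq_real, real_inner_smul_right, norm_smul, mul_pow,
      real_inner_comm, ← hr]
    have : ‖s‖ = s := abs_of_nonneg hs0
    rw [this]; ring
  have heq : (w - (η * c₁ * ‖w - wstar‖) • g) - wstar = (w - wstar) - s • g := by
    rw [hs, hr]; abel
  rw [heq, key]
  have h1 : 2 * s * ⟪g, w - wstar⟫ ≥ 2 * s * ((μ / 2) * r) :=
    mul_le_mul_of_nonneg_left hinner (by positivity)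
  have h2 : s ^ 2 * ‖g‖ ^ 2 ≤ s ^ 2 * L ^ 2 := by
    apply mul_le_mul_of_nonneg_left _ (by positivity)
    exact pow_le_pow_left₀ (norm_nonneg g) hL 2
  have e1 : 2 * s * ((μ / 2) * r) = μ * η * c₁ * r ^ 2 := by rw [hs]; ring
  have e2 : s ^ 2 * L ^ 2 = η ^ 2 * c₁ ^ 2 * L ^ 2 * r ^ 2 := by rw [hs]; ring
  have goal_rhs : (1 - μ * η * c₁ + η ^ 2 * c₁ ^ 2 * L ^ 2) * r ^ 2
      = r ^ 2 - μ * η * c₁ * r ^ 2 + η ^ 2 * c₁ ^ 2 * L ^ 2 * r ^ 2 := by ring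
  linarith
end

section
/- Exponential teachability (Theorem 1). Let E be a finite-dimensional real inner product space and ℓ_i : E → ℝ for i ∈ Fin n be differentiable functions such that each ℓ_i is L_i-Lipschitz (hence ‖∇ℓ_i(u)‖ ≤ L_i for all u) and order-1 μ_i-strongly convex with μ_i ≥ 0, i.e. ℓ_i(v) ≥ ℓ_i(u) + ⟨∇ℓ_i(u), v − u⟩ + (μ_i/2)‖v − u‖ for all u, v. Assume the interpolation condition: w* ∈ E satisfies ℓ_i(w*) ≤ ℓ_i(u) for every u ∈ E and every i. Let η > 0, c_1 > 0, let I_0, I_1, … be i.i.d. uniform random indices on Fin n, and from a deterministic initialization w^0 define w^{t+1} = w^t − η c_1 ‖w^t − w*‖ ∇ℓ_{I_t}(w^t). Set μ̄ = (1/n) Σ_{i} μ_i and L_max = max_i L_i. Then for every T ≥ 0, E‖w^T − w*‖² ≤ (1 − c_1 η μ̄ + c_1² η² L_max²)^T ‖w^0 − w*‖². -/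
open scoped BigOperators RealInnerProductSpace

/-- **Exponential teachability (Theorem 1).** For differentiable losses `ℓ_i` that are
`L_i`-Lipschitz (hence `‖∇ℓ_i(u)‖ ≤ L_i`) and order-1 `μ_i`-strongly convex, under the
interpolation condition that `w*` minimizes every `ℓ_i`, the label-rescaled stochastic
gradient iteration `w^{t+1} = w^t − η c₁ ‖w^t − w*‖ ∇ℓ_{I_t}(w^t)` with i.i.d. uniform
indices (encoded as the uniform average over index sequences `σ : Fin T → Fin n`)
satisfies `E‖w^T − w*‖² ≤ (1 − c₁ η μ̄ + c₁² η² L_max²)^T ‖w^0 − w*‖²`. -/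
theorem exponential_teachability
    {E : Type*} [NormedAddCommGroup E] [InnerProductSpace ℝ E] [FiniteDimensional ℝ E]
    (n : ℕ) (hn : 0 < n)
    (ℓ : Fin n → E → ℝ) (hdiff : ∀ i, Differentiable ℝ (ℓ i))
    (L : Fin n → ℝ)
    (hlip : ∀ i (u v : E), |ℓ i u - ℓ i v| ≤ L i * ‖u - v‖)
    (hgradbound : ∀ i (u : E), ‖gradient (ℓ i) u‖ ≤ L i)
    (μ : Fin n → ℝ) (hμ : ∀ i, 0 ≤ μ i)
    (hsc : ∀ i (u v : E),
      ℓ i v ≥ ℓ i u + ⟪gradient (ℓ i) u, v - u⟫ + (μ i / 2) * ‖v - u‖)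
    (wstar : E) (hinterp : ∀ i (u : E), ℓ i wstar ≤ ℓ i u)
    (η c₁ : ℝ) (hη : 0 < η) (hc₁ : 0 < c₁)
    (w0 : E)
    (w : ∀ T : ℕ, (Fin T → Fin n) → E)
    (hw0 : ∀ σ : Fin 0 → Fin n, w 0 σ = w0)
    (hwS : ∀ (T : ℕ) (σ : Fin (T + 1) → Fin n),
      w (T + 1) σ =
        w T (fun t => σ t.castSucc) -
          (η * c₁ * ‖w T (fun t => σ t.castSucc) - wstar‖) •
            gradient (ℓ (σ (Fin.last T))) (w T (fun t => σ t.castSucc)))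
    (μbar Lmax : ℝ)
    (hμbar : μbar = (∑ i, μ i) / n)
    (hLmax : Lmax = Finset.univ.sup' ⟨⟨0, hn⟩, Finset.mem_univ _⟩ L) :
    ∀ T : ℕ,
      (∑ σ : Fin T → Fin n, ‖w T σ - wstar‖ ^ 2) / (n : ℝ) ^ T ≤
        (1 - c₁ * η * μbar + c₁ ^ 2 * η ^ 2 * Lmax ^ 2) ^ T * ‖w0 - wstar‖ ^ 2 := by
  intro T
  set ρ : ℝ := 1 - c₁ * η * μbar + c₁ ^ 2 * η ^ 2 * Lmax ^ 2 with hρ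
  have hnR : (0 : ℝ) < (n : ℝ) := by exact_mod_cast hn
  have hL0 : ∀ i, (0 : ℝ) ≤ L i := fun i => le_trans (norm_nonneg _) (hgradbound i 0)
  have hLm : ∀ i, L i ≤ Lmax := fun i => hLmax ▸ Finset.le_sup' L (Finset.mem_univ i)
  have hLmax0 : (0 : ℝ) ≤ Lmax := le_trans (hL0 ⟨0, hn⟩) (hLm _)
  have grad_lb : ∀ i (u : E),
      (μ i / 2) * ‖u - wstar‖ ≤ ⟪gradient (ℓ i) u, u - wstar⟫ := by
    intro i u
    have h := hsc i u wstar
    have h2 := hinterp i u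
    have e1 : ⟪gradient (ℓ i) u, wstar - u⟫ = -⟪gradient (ℓ i) u, u - wstar⟫ := by
      rw [← inner_neg_right, neg_sub]
    have e2 : ‖wstar - u‖ = ‖u - wstar‖ := norm_sub_rev _ _
    rw [e1, e2] at h
    linarith
  have step : ∀ i (u : E),
      ‖u - (η * c₁ * ‖u - wstar‖) • gradient (ℓ i) u - wstar‖ ^ 2 ≤
        (1 - c₁ * η * μ i + c₁ ^ 2 * η ^ 2 * Lmax ^ 2) * ‖u - wstar‖ ^ 2 := by
    intro i u
    set g := gradient (ℓ i) u with hg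
    set d := u - wstar with hd
    have hrw : u - (η * c₁ * ‖d‖) • g - wstar = d - (η * c₁ * ‖d‖) • g := by
      rw [hd]; abel
    rw [hrw]
    have hexp : ‖d - (η * c₁ * ‖d‖) • g‖ ^ 2
        = ‖d‖ ^ 2 - 2 * ((η * c₁ * ‖d‖) * ⟪d, g⟫) + (η * c₁ * ‖d‖) ^ 2 * ‖g‖ ^ 2 := by
      rw [norm_sub_sq_real, real_inner_smul_right, norm_smul, mul_pow, Real.norm_eq_abs, sq_abs]
    rw [hexp]
    have hsnn : (0 : ℝ) ≤ η * c₁ * ‖d‖ := by positivity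
    have hinner : (μ i / 2) * ‖d‖ ≤ ⟪d, g⟫ := by
      rw [real_inner_comm]; exact grad_lb i u
    have hgL : ‖g‖ ≤ Lmax := (hgradbound i u).trans (hLm i)
    have hgsq : ‖g‖ ^ 2 ≤ Lmax ^ 2 := by nlinarith [norm_nonneg g]
    have h1 := mul_le_mul_of_nonneg_left hinner hsnn
    have h2 := mul_le_mul_of_nonneg_left hgsq (sq_nonneg (η * c₁ * ‖d‖))
    nlinarith [norm_nonneg d]
  by_cases hw0star : w0 = wstar
  · have hall : ∀ T (σ : Fin T → Fin n), w T σ = wstar := by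
      intro T
      induction T with
      | zero => intro σ; rw [hw0 σ, hw0star]
      | succ T ih => intro σ; rw [hwS T σ, ih]; simp
    simp [hall, hw0star]
  · have hd0 : (0 : ℝ) < ‖w0 - wstar‖ := by
      rw [norm_pos_iff, sub_ne_zero]; exact hw0star
    have hμle : ∀ i, μ i ≤ 2 * Lmax := by
      intro i
      have h1 := grad_lb i w0
      have h2 : ⟪gradient (ℓ i) w0, w0 - wstar⟫ ≤ Lmax * ‖w0 - wstar‖ :=
        (real_inner_le_norm _ _).trans
          (mul_le_mul_of_nonneg_right ((hgradbound i w0).trans (hLm i)) (norm_nonneg _))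
      nlinarith
    have hμbar_le : μbar ≤ 2 * Lmax := by
      rw [hμbar, div_le_iff₀ hnR]
      calc ∑ i, μ i ≤ ∑ _i : Fin n, 2 * Lmax :=
            Finset.sum_le_sum fun i _ => hμle i
        _ = 2 * Lmax * (n : ℝ) := by
            rw [Finset.sum_const, Finset.card_univ, Fintype.card_fin, nsmul_eq_mul]; ring
    have hρ0 : (0 : ℝ) ≤ ρ := by
      nlinarith [sq_nonneg (1 - c₁ * η * Lmax), mul_pos hη hc₁,
        mul_le_mul_of_nonneg_left hμbar_le (le_of_lt (mul_pos hc₁ hη))]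
    have key : ∀ T, (∑ σ : Fin T → Fin n, ‖w T σ - wstar‖ ^ 2) ≤
        ρ ^ T * (n : ℝ) ^ T * ‖w0 - wstar‖ ^ 2 := by
      intro T
      induction T with
      | zero =>
        have h0 : ∀ σ : Fin 0 → Fin n, ‖w 0 σ - wstar‖ ^ 2 = ‖w0 - wstar‖ ^ 2 :=
          fun σ => by rw [hw0]
        rw [Finset.sum_congr rfl (fun σ _ => h0 σ), Finset.sum_const, Finset.card_univ]
        simp
      | succ T ih =>
        have hsum : (∑ σ : Fin (T + 1) → Fin n, ‖w (T + 1) σ - wstar‖ ^ 2)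
            = ∑ p : Fin n × (Fin T → Fin n),
                ‖w (T + 1) (Fin.snocEquiv (fun _ => Fin n) p) - wstar‖ ^ 2 :=
          (Fintype.sum_equiv (Fin.snocEquiv (fun _ => Fin n)) _ _ (fun p => rfl)).symm
        calc (∑ σ : Fin (T + 1) → Fin n, ‖w (T + 1) σ - wstar‖ ^ 2)
            = ∑ i : Fin n, ∑ σ' : Fin T → Fin n,
                ‖w T σ' - (η * c₁ * ‖w T σ' - wstar‖) • gradient (ℓ i) (w T σ') - wstar‖ ^ 2 := by
              rw [hsum, Fintype.sum_prod_type]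
              refine Finset.sum_congr rfl fun i _ => Finset.sum_congr rfl fun σ' _ => ?_
              have he : (Fin.snocEquiv (fun _ => Fin n)) (i, σ') = Fin.snoc σ' i := rfl
              rw [he, hwS]
              simp [Fin.snoc_castSucc, Fin.snoc_last]
          _ ≤ ∑ i : Fin n, ∑ σ' : Fin T → Fin n,
                (1 - c₁ * η * μ i + c₁ ^ 2 * η ^ 2 * Lmax ^ 2) * ‖w T σ' - wstar‖ ^ 2 :=
              Finset.sum_le_sum fun i _ => Finset.sum_le_sum fun σ' _ => step i (w T σ')
          _ = (∑ i : Fin n, (1 - c₁ * η * μ i + c₁ ^ 2 * η ^ 2 * Lmax ^ 2)) *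
                ∑ σ' : Fin T → Fin n, ‖w T σ' - wstar‖ ^ 2 := by
              rw [Finset.sum_mul]
              exact Finset.sum_congr rfl fun i _ => (Finset.mul_sum _ _ _).symm
          _ = (n : ℝ) * ρ * ∑ σ' : Fin T → Fin n, ‖w T σ' - wstar‖ ^ 2 := by
              have hc : ∑ i : Fin n, (1 - c₁ * η * μ i + c₁ ^ 2 * η ^ 2 * Lmax ^ 2)
                  = (n : ℝ) * ρ := by
                rw [hρ, hμbar]
                rw [Finset.sum_add_distrib, Finset.sum_sub_distrib, Finset.sum_const,
                  ← Finset.mul_sum, Finset.card_univ, Fintype.card_fin, Finset.sum_const,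
                  Finset.card_univ, Fintype.card_fin]
                field_simp
                ring
              rw [hc]
          _ ≤ (n : ℝ) * ρ * (ρ ^ T * (n : ℝ) ^ T * ‖w0 - wstar‖ ^ 2) :=
              mul_le_mul_of_nonneg_left ih (by positivity)
          _ = ρ ^ (T + 1) * (n : ℝ) ^ (T + 1) * ‖w0 - wstar‖ ^ 2 := by ring
    rw [div_le_iff₀ (by positivity : (0 : ℝ) < (n : ℝ) ^ T)]
    exact (key T).trans (le_of_eq (by ring))
end

section
/- One-step quasi-contraction under an Armijo-type condition (intermediate inequality in the proof of Theorem 2). Let E be a finite-dimensional real inner product space and ℓ : E → ℝ differentiable. Let w, w* ∈ E, μ ≥ 0, and assume the strong convexity inequality ℓ(w*) ≥ ℓ(w) + ⟨∇ℓ(w), w* − w⟩ + (μ/2)‖w* − w‖². Let η > 0, c_2 > 0, set w⁺ = w − η ∇ℓ(w), and assume the Armijo condition ℓ(w⁺) ≤ ℓ(w) − c_2 η ‖∇ℓ(w)‖² together with ℓ(w*) ≤ ℓ(w⁺). Then ‖w⁺ − w*‖² ≤ (1 − μη)‖w − w*‖² + (2η − η/c_2)(ℓ(w*) − ℓ(w)).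 -/
open scoped RealInnerProductSpace

/-- **One-step quasi-contraction under an Armijo-type condition (intermediate
inequality in the proof of Theorem 2).** Under the strong convexity inequality at
`(w, w*)`, the Armijo condition `ℓ(w⁺) ≤ ℓ(w) − c₂ η ‖∇ℓ(w)‖²` for the step
`w⁺ = w − η∇ℓ(w)`, and the interpolation inequality `ℓ(w*) ≤ ℓ(w⁺)`, one has
`‖w⁺ − w*‖² ≤ (1 − μη)‖w − w*‖² + (2η − η/c₂)(ℓ(w*) − ℓ(w))`. -/
theorem one_step_quasi_contraction_armijo
    {E : Type*} [NormedAddCommGroup E] [InnerProductSpace ℝ E] [FiniteDimensional ℝ E]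
    (ℓ : E → ℝ) (hdiff : Differentiable ℝ ℓ)
    (w wstar : E) (μ : ℝ) (hμ : 0 ≤ μ)
    (hsc : ℓ wstar ≥
      ℓ w + ⟪gradient ℓ w, wstar - w⟫ + (μ / 2) * ‖wstar - w‖ ^ 2)
    (η c₂ : ℝ) (hη : 0 < η) (hc₂ : 0 < c₂)
    (harmijo : ℓ (w - η • gradient ℓ w) ≤ ℓ w - c₂ * η * ‖gradient ℓ w‖ ^ 2)
    (hinterp : ℓ wstar ≤ ℓ (w - η • gradient ℓ w)) :
    ‖(w - η • gradient ℓ w) - wstar‖ ^ 2 ≤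
      (1 - μ * η) * ‖w - wstar‖ ^ 2 + (2 * η - η / c₂) * (ℓ wstar - ℓ w) := by
  set g := gradient ℓ w with hg
  have hexp : ‖(w - η • g) - wstar‖ ^ 2
      = ‖w - wstar‖ ^ 2 - 2 * η * ⟪g, w - wstar⟫ + η ^ 2 * ‖g‖ ^ 2 := by
    have h1 : (w - η • g) - wstar = (w - wstar) - η • g := by abel
    rw [h1, @norm_sub_sq_real, real_inner_smul_right, norm_smul, real_inner_comm]
    simp [abs_of_pos hη]
    ring
  have hs : ⟪g, wstar - w⟫ = - ⟪g, w - wstar⟫ := by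
    rw [← inner_neg_right]; congr 1; abel
  have hnn : ‖wstar - w‖ = ‖w - wstar‖ := norm_sub_rev _ _
  rw [hs, hnn] at hsc
  have hg2 : η ^ 2 * ‖g‖ ^ 2 ≤ (η / c₂) * (ℓ w - ℓ wstar) := by
    have h : c₂ * η * ‖g‖ ^ 2 ≤ ℓ w - ℓ wstar := by linarith
    rw [div_mul_eq_mul_div, le_div_iff₀ hc₂]
    nlinarith [mul_le_mul_of_nonneg_left h hη.le]
  rw [hexp]
  nlinarith [sq_nonneg ‖w - wstar‖, mul_nonneg hμ hη.le]
end

section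
/- One-step contraction under Armijo line search with c_2 ≥ 1/2 (key lemma of Theorem 2). Let E be a finite-dimensional real inner product space, ℓ : E → ℝ differentiable, w, w* ∈ E, μ ≥ 0, and assume ℓ(w*) ≥ ℓ(w) + ⟨∇ℓ(w), w* − w⟩ + (μ/2)‖w* − w‖². Let η > 0 and c_2 ≥ 1/2, set w⁺ = w − η∇ℓ(w), and assume the Armijo condition ℓ(w⁺) ≤ ℓ(w) − c_2η‖∇ℓ(w)‖² as well as the interpolation inequalities ℓ(w*) ≤ ℓ(w) and ℓ(w*) ≤ ℓ(w⁺). Then ‖w⁺ − w*‖² ≤ (1 − μη)‖w − w*‖². -/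
open scoped RealInnerProductSpace

/-- **One-step contraction under Armijo line search with `c₂ ≥ 1/2` (key lemma of
Theorem 2).** Under the strong convexity inequality at `(w, w*)`, the Armijo condition
with parameter `c₂ ≥ 1/2` for the step `w⁺ = w − η∇ℓ(w)`, and the interpolation
inequalities `ℓ(w*) ≤ ℓ(w)` and `ℓ(w*) ≤ ℓ(w⁺)`, one has
`‖w⁺ − w*‖² ≤ (1 − μη)‖w − w*‖²`. -/
theorem one_step_contraction_armijo
    {E : Type*} [NormedAddCommGroup E] [InnerProductSpace ℝ E] [FiniteDimensional ℝ E]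
    (ℓ : E → ℝ) (hdiff : Differentiable ℝ ℓ)
    (w wstar : E) (μ : ℝ) (hμ : 0 ≤ μ)
    (hsc : ℓ wstar ≥
      ℓ w + ⟪gradient ℓ w, wstar - w⟫ + (μ / 2) * ‖wstar - w‖ ^ 2)
    (η c₂ : ℝ) (hη : 0 < η) (hc₂ : (1 : ℝ) / 2 ≤ c₂)
    (harmijo : ℓ (w - η • gradient ℓ w) ≤ ℓ w - c₂ * η * ‖gradient ℓ w‖ ^ 2)
    (hinterp : ℓ wstar ≤ ℓ w)
    (hinterp' : ℓ wstar ≤ ℓ (w - η • gradient ℓ w)) :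
    ‖(w - η • gradient ℓ w) - wstar‖ ^ 2 ≤ (1 - μ * η) * ‖w - wstar‖ ^ 2 := by
  set g := gradient ℓ w with hg
  have hexp : ‖(w - η • g) - wstar‖ ^ 2
      = ‖w - wstar‖ ^ 2 - 2 * (η * ⟪g, w - wstar⟫) + η ^ 2 * ‖g‖ ^ 2 := by
    have : (w - η • g) - wstar = (w - wstar) - η • g := by abel
    rw [this, norm_sub_sq_real, real_inner_smul_right, norm_smul, real_inner_comm]
    simp [mul_pow, abs_of_pos hη]
  have hinner : ⟪g, wstar - w⟫ = -⟪g, w - wstar⟫ := by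
    rw [← inner_neg_right]; congr 1; abel
  rw [hinner] at hsc
  have hs : η * ‖wstar - w‖ ^ 2 = η * ‖w - wstar‖ ^ 2 := by rw [norm_sub_rev]
  have h1 : c₂ * η * ‖g‖ ^ 2 ≤ ℓ w - ℓ wstar := by linarith
  have h2 : η ^ 2 * ‖g‖ ^ 2 ≤ 2 * η * (c₂ * η * ‖g‖ ^ 2) := by
    have h0 : (0:ℝ) ≤ (2*c₂-1) * η^2 * ‖g‖^2 :=
      mul_nonneg (mul_nonneg (by linarith) (sq_nonneg η)) (sq_nonneg ‖g‖)
    nlinarith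
  nlinarith [hη.le]
end

section
/- Exponential teachability without target parameters (Theorem 2). Let E be a finite-dimensional real inner product space and ℓ_i : E → ℝ for i ∈ Fin n be differentiable, convex functions with L_i-Lipschitz gradients (L_i > 0) that are μ_i-strongly convex of order 2 with μ_i ≥ 0 (μ_i = 0 allowed), i.e. ℓ_i(v) ≥ ℓ_i(u) + ⟨∇ℓ_i(u), v − u⟩ + (μ_i/2)‖v − u‖² for all u, v. Assume the interpolation condition: w* ∈ E satisfies ℓ_i(w*) ≤ ℓ_i(u) for all u and all i. Let η_max > 0, let I_0, I_1, … be i.i.d. uniform random indices on Fin n, and define w^{t+1} = w^t − η_t ∇ℓ_{I_t}(w^t) from a deterministic w^0, where each (possibly random, index- and iterate-dependent) step size η_t satisfies min{1/L_{I_t}, η_max} ≤ η_t ≤ η_max and the Armijo condition with c_2 = 1/2: ℓ_{I_t}(w^{t+1}) ≤ ℓ_{I_t}(w^t) − (1/2) η_t ‖∇ℓ_{I_t}(w^t)‖². Set μ̄ = (1/n)Σ_i μ_i and L_max = max_i L_i. Then for all T ≥ 0, E‖w^T − w*‖² ≤ (max{1 − μ̄/L_max, 1 − μ̄ η_max})^T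 ‖w^0 − w*‖². -/
open scoped BigOperators RealInnerProductSpace

/-- **Exponential teachability without target parameters (Theorem 2).** For convex
differentiable losses `ℓ_i` with `L_i`-Lipschitz gradients that are `μ_i`-strongly convex
of order 2, under the interpolation condition that `w*` minimizes every `ℓ_i`, the
stochastic gradient iteration `w^{t+1} = w^t − η_t ∇ℓ_{I_t}(w^t)` with i.i.d. uniform
indices (encoded as averages over index sequences `σ : Fin T → Fin n`) and step sizes
satisfying `min{1/L_{I_t}, ηmax} ≤ η_t ≤ ηmax` and the Armijo condition with `c₂ = 1/2`
satisfies
`E‖w^T − w*‖² ≤ (max{1 − μ̄/L_max, 1 − μ̄ ηmax})^T ‖w^0 − w*‖²`. -/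
theorem exponential_teachability_without_target
    {E : Type*} [NormedAddCommGroup E] [InnerProductSpace ℝ E] [FiniteDimensional ℝ E]
    (n : ℕ) (hn : 0 < n)
    (ℓ : Fin n → E → ℝ) (hdiff : ∀ i, Differentiable ℝ (ℓ i))
    (hconv : ∀ i, ConvexOn ℝ Set.univ (ℓ i))
    (L : Fin n → ℝ) (hLpos : ∀ i, 0 < L i)
    (hlip : ∀ i (u v : E),
      ‖gradient (ℓ i) u - gradient (ℓ i) v‖ ≤ L i * ‖u - v‖)
    (μ : Fin n → ℝ) (hμ : ∀ i, 0 ≤ μ i)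
    (hsc : ∀ i (u v : E),
      ℓ i v ≥ ℓ i u + ⟪gradient (ℓ i) u, v - u⟫ + (μ i / 2) * ‖v - u‖ ^ 2)
    (wstar : E) (hinterp : ∀ i (u : E), ℓ i wstar ≤ ℓ i u)
    (ηmax : ℝ) (hηmax : 0 < ηmax)
    (w0 : E)
    (w : ∀ T : ℕ, (Fin T → Fin n) → E)
    (ηstep : ∀ T : ℕ, (Fin (T + 1) → Fin n) → ℝ)
    (hw0 : ∀ σ : Fin 0 → Fin n, w 0 σ = w0)
    (hwS : ∀ (T : ℕ) (σ : Fin (T + 1) → Fin n),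
      w (T + 1) σ =
        w T (fun t => σ t.castSucc) -
          ηstep T σ • gradient (ℓ (σ (Fin.last T))) (w T (fun t => σ t.castSucc)))
    (hηlow : ∀ (T : ℕ) (σ : Fin (T + 1) → Fin n),
      min (1 / L (σ (Fin.last T))) ηmax ≤ ηstep T σ)
    (hηhigh : ∀ (T : ℕ) (σ : Fin (T + 1) → Fin n), ηstep T σ ≤ ηmax)
    (harmijo : ∀ (T : ℕ) (σ : Fin (T + 1) → Fin n),
      ℓ (σ (Fin.last T)) (w (T + 1) σ) ≤
        ℓ (σ (Fin.last T)) (w T (fun t => σ t.castSucc)) -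
          (1 / 2) * ηstep T σ *
            ‖gradient (ℓ (σ (Fin.last T))) (w T (fun t => σ t.castSucc))‖ ^ 2)
    (μbar Lmax : ℝ)
    (hμbar : μbar = (∑ i, μ i) / n)
    (hLmax : Lmax = Finset.univ.sup' ⟨⟨0, hn⟩, Finset.mem_univ _⟩ L) :
    ∀ T : ℕ,
      (∑ σ : Fin T → Fin n, ‖w T σ - wstar‖ ^ 2) / (n : ℝ) ^ T ≤
        (max (1 - μbar / Lmax) (1 - μbar * ηmax)) ^ T * ‖w0 - wstar‖ ^ 2 := by
  by_cases hsub : ∀ v : E, v = 0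
  · intro T
    have h1 : ∀ σ : Fin T → Fin n, ‖w T σ - wstar‖ = 0 := by
      intro σ; rw [hsub (w T σ - wstar)]; simp
    have h2 : ‖w0 - wstar‖ = 0 := by rw [hsub (w0 - wstar)]; simp
    simp [h1, h2]
  push_neg at hsub
  obtain ⟨v, hv⟩ := hsub
  have hnpos : (0 : ℝ) < n := by exact_mod_cast hn
  have hLle : ∀ i, L i ≤ Lmax := by
    intro i; rw [hLmax]; exact Finset.le_sup' L (Finset.mem_univ i)
  have hLmaxpos : (0 : ℝ) < Lmax :=
    lt_of_lt_of_le (hLpos ⟨0, hn⟩) (hLle ⟨0, hn⟩)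
  have hμbar0 : 0 ≤ μbar := by
    rw [hμbar]
    exact div_nonneg (Finset.sum_nonneg fun i _ => hμ i) hnpos.le
  -- μ i ≤ L i
  have hmuL : ∀ i, μ i ≤ L i := by
    intro i
    have h1 := hsc i 0 v
    have h2 := hsc i v 0
    have hcs : ⟪gradient (ℓ i) v - gradient (ℓ i) 0, v⟫ ≤ L i * ‖v‖ ^ 2 := by
      calc ⟪gradient (ℓ i) v - gradient (ℓ i) 0, v⟫
          ≤ ‖gradient (ℓ i) v - gradient (ℓ i) 0‖ * ‖v‖ := real_inner_le_norm _ _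
        _ ≤ (L i * ‖v - 0‖) * ‖v‖ :=
            mul_le_mul_of_nonneg_right (hlip i v 0) (norm_nonneg v)
        _ = L i * ‖v‖ ^ 2 := by rw [sub_zero]; ring
    have hv2 : 0 < ‖v‖ ^ 2 := by
      have := norm_pos_iff.mpr hv; positivity
    simp only [sub_zero, zero_sub, inner_neg_right, norm_neg, inner_sub_left] at h1 h2 hcs
    nlinarith [hv2, h1, h2, hcs]
  have hμbarle : μbar ≤ Lmax := by
    rw [hμbar, div_le_iff₀ hnpos]
    calc ∑ i, μ i ≤ ∑ _i : Fin n, Lmax :=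
          Finset.sum_le_sum (fun i _ => (hmuL i).trans (hLle i))
      _ = Lmax * n := by simp [mul_comm]
  set c : ℝ := min (1 / Lmax) ηmax with hc
  have hcpos : 0 < c := lt_min (by positivity) hηmax
  set ρ : ℝ := max (1 - μbar / Lmax) (1 - μbar * ηmax) with hρdef
  have hρ : ρ = 1 - c * μbar := by
    have hdm : μbar / Lmax = μbar * (1 / Lmax) := by ring
    rcases le_total (1 / Lmax) ηmax with h | h
    · rw [hρdef, hc, min_eq_left h, max_eq_left (by
        rw [hdm]; nlinarith [mul_le_mul_of_nonneg_left h hμbar0]), hdm]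
      ring
    · rw [hρdef, hc, min_eq_right h, max_eq_right (by
        rw [hdm]; nlinarith [mul_le_mul_of_nonneg_left h hμbar0])]
      ring
  have hρ0 : 0 ≤ ρ := by
    have h1 : c * μbar ≤ (1 / Lmax) * μbar :=
      mul_le_mul_of_nonneg_right (min_le_left _ _) hμbar0
    have h2 : (1 / Lmax) * μbar ≤ 1 := by
      rw [div_mul_eq_mul_div, one_mul, div_le_one hLmaxpos]; exact hμbarle
    rw [hρ]; linarith
  -- one-step bound
  have hstep : ∀ (T : ℕ) (σ : Fin (T + 1) → Fin n),
      ‖w (T + 1) σ - wstar‖ ^ 2 ≤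
        (1 - c * μ (σ (Fin.last T))) * ‖w T (fun t => σ t.castSucc) - wstar‖ ^ 2 := by
    intro T σ
    set i := σ (Fin.last T) with hi
    set x := w T (fun t => σ t.castSucc) with hx
    set η := ηstep T σ with hη
    set g := gradient (ℓ i) x with hg
    have hηc : c ≤ η := by
      refine le_trans ?_ (hηlow T σ)
      rw [hc]
      exact min_le_min (by
        apply one_div_le_one_div_of_le (hLpos i) (hLle i)) le_rfl
    have hηpos : 0 < η := lt_of_lt_of_le (lt_min (one_div_pos.mpr (hLpos i)) hηmax) (hηlow T σ)
    have hexp : ‖w (T + 1) σ - wstar‖ ^ 2 =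
        ‖x - wstar‖ ^ 2 - 2 * η * ⟪g, x - wstar⟫ + η ^ 2 * ‖g‖ ^ 2 := by
      rw [hwS T σ, ← hi, ← hx, ← hη, ← hg]
      have h : x - η • g - wstar = (x - wstar) - η • g := by abel
      rw [h, norm_sub_sq_real, real_inner_smul_right, norm_smul, real_inner_comm]
      simp [Real.norm_eq_abs, mul_pow, sq_abs]
      ring
    have hsc' := hsc i x wstar
    have hflip : ⟪g, wstar - x⟫ = -⟪g, x - wstar⟫ := by
      rw [← inner_neg_right, neg_sub]
    rw [hflip, norm_sub_rev wstar x] at hsc'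
    have harm := harmijo T σ
    rw [← hi, ← hx, ← hη, ← hg] at harm
    have hint : ℓ i wstar ≤ ℓ i (w (T + 1) σ) := hinterp i _
    have hd : (0:ℝ) ≤ ‖x - wstar‖ ^ 2 := by positivity
    rw [hexp]
    nlinarith [mul_nonneg hηpos.le
        (by linarith : (0:ℝ) ≤ ⟪g, x - wstar⟫ - (ℓ i x - ℓ i wstar) - μ i / 2 * ‖x - wstar‖ ^ 2),
      mul_nonneg hηpos.le
        (by linarith : (0:ℝ) ≤ (ℓ i x - ℓ i wstar) - 1 / 2 * η * ‖g‖ ^ 2),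
      mul_nonneg (mul_nonneg (sub_nonneg.2 hηc) (hμ i)) hd]
  -- induction
  intro T
  induction T with
  | zero => simp [hw0]
  | succ T ih =>
    have hsum : (∑ σ : Fin (T + 1) → Fin n, ‖w (T + 1) σ - wstar‖ ^ 2) ≤
        (n * ρ) * ∑ σ : Fin T → Fin n, ‖w T σ - wstar‖ ^ 2 := by
      have hrw : (∑ σ : Fin (T + 1) → Fin n, ‖w (T + 1) σ - wstar‖ ^ 2) =
          ∑ i : Fin n, ∑ σ' : Fin T → Fin n, ‖w (T + 1) (Fin.snoc σ' i) - wstar‖ ^ 2 := by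
        rw [← (Fin.snocEquiv (fun _ => Fin n)).sum_comp
            (fun σ => ‖w (T + 1) σ - wstar‖ ^ 2), Fintype.sum_prod_type]
        rfl
      rw [hrw]
      calc ∑ i : Fin n, ∑ σ' : Fin T → Fin n, ‖w (T + 1) (Fin.snoc σ' i) - wstar‖ ^ 2
          ≤ ∑ i : Fin n, ∑ σ' : Fin T → Fin n, (1 - c * μ i) * ‖w T σ' - wstar‖ ^ 2 := by
            refine Finset.sum_le_sum fun i _ => Finset.sum_le_sum fun σ' _ => ?_
            have h := hstep T (Fin.snoc σ' i)
            simpa [Fin.snoc_last, Fin.snoc_castSucc] using h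
        _ = (∑ i : Fin n, (1 - c * μ i)) * ∑ σ' : Fin T → Fin n, ‖w T σ' - wstar‖ ^ 2 := by
            rw [Finset.sum_mul]
            exact Finset.sum_congr rfl fun i _ => (Finset.mul_sum _ _ _).symm
        _ = (n * ρ) * ∑ σ' : Fin T → Fin n, ‖w T σ' - wstar‖ ^ 2 := by
            congr 1
            rw [hρ]
            have : (∑ i : Fin n, μ i) = n * μbar := by
              rw [hμbar]; field_simp
            rw [Finset.sum_sub_distrib, ← Finset.mul_sum, this]
            simp
            ring
    have hpow : (0 : ℝ) < (n : ℝ) ^ T := pow_pos hnpos T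
    calc (∑ σ : Fin (T + 1) → Fin n, ‖w (T + 1) σ - wstar‖ ^ 2) / (n : ℝ) ^ (T + 1)
        ≤ ((n * ρ) * ∑ σ : Fin T → Fin n, ‖w T σ - wstar‖ ^ 2) / (n : ℝ) ^ (T + 1) := by
          gcongr
        _ = ρ * ((∑ σ : Fin T → Fin n, ‖w T σ - wstar‖ ^ 2) / (n : ℝ) ^ T) := by
          rw [pow_succ]
          field_simp
        _ ≤ ρ * (ρ ^ T * ‖w0 - wstar‖ ^ 2) := mul_le_mul_of_nonneg_left ih hρ0
        _ = ρ ^ (T + 1) * ‖w0 - wstar‖ ^ 2 := by rw [pow_succ]; ring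
end

section
/- One-step quadratic contraction for the generalized Newton update (key step of Theorem 3). Let E be a finite-dimensional real inner product space, δ > 0, w* ∈ E, and let f : E → ℝ be twice continuously differentiable on the closed ball B̄(w*, δ) with ∇f(w*) = 0. Let H(u) denote the Hessian of f at u (the derivative at u of the gradient map ∇f, viewed as a continuous linear operator on E), and assume H is L-Lipschitz on B̄(w*, δ) in operator norm: ‖H(u) − H(v)‖ ≤ L‖u − v‖. Fix α ∈ [0,1], let w ∈ B̄(w*, δ), and suppose the operator A = H(αw* + (1−α)w) is invertible with operator norm ‖A^{-1}‖ ≤ μ. Then the generalized Newton step w⁺ = w − A^{-1}(∇f(w)) satisfies ‖w⁺ − w*‖ ≤ (μ L ((1−α)² + α²)/2) ‖w − w*‖². -/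
/-- **One-step quadratic contraction for the generalized Newton update (key step of
Theorem 3).** With `H(u)` the Hessian of `f` at `u` (the derivative of the gradient map,
assumed `L`-Lipschitz in operator norm on the closed ball `B̄(w*, δ)`), `∇f(w*) = 0`,
`α ∈ [0,1]`, and the operator `A = H(αw* + (1−α)w)` invertible with `‖A⁻¹‖ ≤ μ`, the
generalized Newton step `w⁺ = w − A⁻¹(∇f(w))` satisfies
`‖w⁺ − w*‖ ≤ (μL((1−α)² + α²)/2)‖w − w*‖²`. -/
theorem generalized_newton_one_step
    {E : Type*} [NormedAddCommGroup E] [InnerProductSpace ℝ E] [FiniteDimensional ℝ E]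
    (δ : ℝ) (hδ : 0 < δ) (wstar : E) (f : E → ℝ)
    (H : E → E →L[ℝ] E)
    (hH : ∀ u ∈ Metric.closedBall wstar δ, HasFDerivAt (gradient f) (H u) u)
    (hcont : ContinuousOn H (Metric.closedBall wstar δ))
    (hgrad0 : gradient f wstar = 0)
    (L : ℝ)
    (hLip : ∀ u ∈ Metric.closedBall wstar δ, ∀ v ∈ Metric.closedBall wstar δ,
      ‖H u - H v‖ ≤ L * ‖u - v‖)
    (α : ℝ) (hα : α ∈ Set.Icc (0 : ℝ) 1)
    (w : E) (hw : w ∈ Metric.closedBall wstar δ)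
    (A : E →L[ℝ] E) (hA : A = H (α • wstar + (1 - α) • w))
    (Ainv : E →L[ℝ] E)
    (hAinv₁ : Ainv.comp A = ContinuousLinearMap.id ℝ E)
    (hAinv₂ : A.comp Ainv = ContinuousLinearMap.id ℝ E)
    (μ : ℝ) (hμ : ‖Ainv‖ ≤ μ) :
    ‖(w - Ainv (gradient f w)) - wstar‖ ≤
      (μ * L * ((1 - α) ^ 2 + α ^ 2) / 2) * ‖w - wstar‖ ^ 2 := by
  obtain ⟨hα0, hα1⟩ := hα
  by_cases hd0 : w = wstar
  · simp [hd0, hgrad0]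
  have hwne : (0:ℝ) < ‖w - wstar‖ := by
    rw [norm_pos_iff]
    exact sub_ne_zero_of_ne hd0
  have hwsmem : wstar ∈ Metric.closedBall wstar δ := Metric.mem_closedBall_self hδ.le
  have hL0 : 0 ≤ L := by
    have h := hLip wstar hwsmem w hw
    have h2 : (0:ℝ) < ‖wstar - w‖ := by rwa [norm_sub_rev]
    nlinarith [norm_nonneg (H wstar - H w)]
  set d := w - wstar with hd
  set β := 1 - α with hβ
  have hβ0 : (0:ℝ) ≤ β := by simp only [hβ]; linarith
  have hβ1 : β ≤ 1 := by simp only [hβ]; linarith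
  have hdδ : ‖d‖ ≤ δ := by
    have := Metric.mem_closedBall.mp hw
    rwa [dist_eq_norm] at this
  set γ : ℝ → E := fun t => wstar + t • d with hγ
  have hγmem : ∀ t ∈ Set.Icc (0:ℝ) 1, γ t ∈ Metric.closedBall wstar δ := by
    intro t ht
    simp only [Metric.mem_closedBall, hγ, dist_eq_norm, add_sub_cancel_left, norm_smul,
      Real.norm_eq_abs]
    calc |t| * ‖d‖ ≤ 1 * ‖d‖ := by
          apply mul_le_mul_of_nonneg_right _ (norm_nonneg d)
          rw [abs_le]; constructor <;> linarith [ht.1, ht.2]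
      _ = ‖d‖ := one_mul _
      _ ≤ δ := hdδ
  have hAeq : α • wstar + (1 - α) • w = γ β := by
    simp only [hγ, hβ, hd]
    module
  have hγβmem : γ β ∈ Metric.closedBall wstar δ := hγmem β ⟨hβ0, hβ1⟩
  have hderiv : ∀ t ∈ Set.uIcc (0:ℝ) 1,
      HasDerivAt (fun t => gradient f (γ t)) (H (γ t) d) t := by
    intro t ht
    rw [Set.uIcc_of_le zero_le_one] at ht
    have hline : HasDerivAt γ d t := by
      simpa [hγ] using ((hasDerivAt_id t).smul_const d).const_add wstar
    exact (hH (γ t) (hγmem t ht)).comp_hasDerivAt t hline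
  have hcont' : ContinuousOn (fun t => H (γ t) d) (Set.uIcc (0:ℝ) 1) := by
    rw [Set.uIcc_of_le zero_le_one]
    have hγc : ContinuousOn γ (Set.Icc (0:ℝ) 1) :=
      (continuous_const.add (continuous_id.smul continuous_const)).continuousOn
    exact (hcont.comp hγc hγmem).clm_apply continuousOn_const
  have hint : IntervalIntegrable (fun t => H (γ t) d) MeasureTheory.volume 0 1 :=
    hcont'.intervalIntegrable
  have hFTC : ∫ t in (0:ℝ)..1, H (γ t) d = gradient f w - gradient f wstar := by
    have := intervalIntegral.integral_eq_sub_of_hasDerivAt hderiv hint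
    simpa [hγ, hd] using this
  have hgw : gradient f w = ∫ t in (0:ℝ)..1, H (γ t) d := by
    rw [hFTC, hgrad0, sub_zero]
  have hdiff : A d - gradient f w = ∫ t in (0:ℝ)..1, (A d - H (γ t) d) := by
    rw [hgw, intervalIntegral.integral_sub (intervalIntegrable_const) hint]
    simp
  have hptbound : ∀ t ∈ Set.Icc (0:ℝ) 1,
      ‖A d - H (γ t) d‖ ≤ (L * ‖d‖ ^ 2) * |β - t| := by
    intro t ht
    have h1 : A d - H (γ t) d = (A - H (γ t)) d := by simp
    rw [h1]
    calc ‖(A - H (γ t)) d‖ ≤ ‖A - H (γ t)‖ * ‖d‖ := (A - H (γ t)).le_opNorm d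
      _ ≤ (L * ‖γ β - γ t‖) * ‖d‖ := by
          apply mul_le_mul_of_nonneg_right _ (norm_nonneg d)
          rw [hA, hAeq]
          exact hLip _ hγβmem _ (hγmem t ht)
      _ = (L * ‖d‖ ^ 2) * |β - t| := by
          have h2 : γ β - γ t = (β - t) • d := by
            simp only [hγ]; module
          rw [h2, norm_smul, Real.norm_eq_abs]; ring
  have hgcont : ContinuousOn (fun t => (L * ‖d‖ ^ 2) * |β - t|) (Set.uIcc (0:ℝ) 1) :=
    (continuous_const.mul ((continuous_const.sub continuous_id).abs)).continuousOn
  have hgint : IntervalIntegrable (fun t => (L * ‖d‖ ^ 2) * |β - t|)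
      MeasureTheory.volume 0 1 := hgcont.intervalIntegrable
  have hnorm : ‖A d - gradient f w‖ ≤ abs (∫ t in (0:ℝ)..1, (L * ‖d‖ ^ 2) * |β - t|) := by
    rw [hdiff]
    apply intervalIntegral.norm_integral_le_abs_of_norm_le _ hgint
    · filter_upwards [MeasureTheory.ae_restrict_mem measurableSet_Ioc] with t ht
      rw [Set.uIoc_of_le zero_le_one] at ht
      exact hptbound t ⟨le_of_lt ht.1, ht.2⟩
  -- compute the integral
  have habs : ∫ t in (0:ℝ)..1, |β - t| = β ^ 2 / 2 + (1 - β) ^ 2 / 2 := by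
    have i1 : IntervalIntegrable (fun t => |β - t|) MeasureTheory.volume 0 β :=
      ((continuous_const.sub continuous_id).abs).intervalIntegrable 0 β
    have i2 : IntervalIntegrable (fun t => |β - t|) MeasureTheory.volume β 1 :=
      ((continuous_const.sub continuous_id).abs).intervalIntegrable β 1
    have hsplit := intervalIntegral.integral_add_adjacent_intervals i1 i2
    have h1 : ∫ t in (0:ℝ)..β, |β - t| = β ^ 2 / 2 := by
      have he : Set.EqOn (fun t => |β - t|) (fun t => β - t) (Set.uIcc (0:ℝ) β) := by
        intro t ht
        rw [Set.uIcc_of_le hβ0] at ht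
        exact abs_of_nonneg (by linarith [ht.2])
      rw [intervalIntegral.integral_congr he,
        intervalIntegral.integral_sub intervalIntegrable_const (continuous_id'.intervalIntegrable _ _),
        intervalIntegral.integral_const, integral_id]
      simp; ring
    have h2 : ∫ t in (β:ℝ)..1, |β - t| = (1 - β) ^ 2 / 2 := by
      have he : Set.EqOn (fun t => |β - t|) (fun t => t - β) (Set.uIcc β 1) := by
        intro t ht
        rw [Set.uIcc_of_le hβ1] at ht
        show |β - t| = t - β
        rw [abs_sub_comm]
        exact abs_of_nonneg (by linarith [ht.1])
      rw [intervalIntegral.integral_congr he,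
        intervalIntegral.integral_sub (continuous_id'.intervalIntegrable _ _) intervalIntegrable_const,
        intervalIntegral.integral_const, integral_id]
      simp; ring
    rw [← hsplit, h1, h2]
  have hintval : abs (∫ t in (0:ℝ)..1, (L * ‖d‖ ^ 2) * |β - t|)
      = (L * ‖d‖ ^ 2) * (β ^ 2 / 2 + (1 - β) ^ 2 / 2) := by
    rw [intervalIntegral.integral_const_mul, habs]
    exact abs_of_nonneg (by positivity)
  have hkey : ‖A d - gradient f w‖ ≤ L * ((1 - α) ^ 2 + α ^ 2) / 2 * ‖d‖ ^ 2 := by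
    calc ‖A d - gradient f w‖ ≤ (L * ‖d‖ ^ 2) * (β ^ 2 / 2 + (1 - β) ^ 2 / 2) := by
          rw [← hintval]; exact hnorm
      _ = L * ((1 - α) ^ 2 + α ^ 2) / 2 * ‖d‖ ^ 2 := by simp only [hβ]; ring
  have hfinal : (w - Ainv (gradient f w)) - wstar = Ainv (A d - gradient f w) := by
    have hAA : Ainv (A d) = d := by
      have := congrArg (fun T : E →L[ℝ] E => T d) hAinv₁
      simpa using this
    rw [map_sub, hAA, hd]
    abel
  rw [hfinal]
  calc ‖Ainv (A d - gradient f w)‖ ≤ ‖Ainv‖ * ‖A d - gradient f w‖ :=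
        Ainv.le_opNorm _
    _ ≤ μ * (L * ((1 - α) ^ 2 + α ^ 2) / 2 * ‖d‖ ^ 2) := by
        apply mul_le_mul hμ hkey (norm_nonneg _) (le_trans (norm_nonneg _) hμ)
    _ = (μ * L * ((1 - α) ^ 2 + α ^ 2) / 2) * ‖w - wstar‖ ^ 2 := by
        rw [hd]; ring
end

section
/- Super-exponential teachability (Theorem 3). Let E be a finite-dimensional real inner product space, δ > 0, w* ∈ E, and let f : E → ℝ be twice continuously differentiable on the closed ball B̄(w*, δ) with ∇f(w*) = 0. Let H(u) be the Hessian of f at u (the derivative of the gradient map), assume H is L-Lipschitz in operator norm on B̄(w*, δ), fix α ∈ [0,1], and assume that for every u ∈ B̄(w*, δ) the operator H(αw* + (1−α)u) is invertible with ‖(H(αw* + (1−α)u))^{-1}‖ ≤ μ. Set q = μL((1−α)² + α²)/2 and assume qδ < 1. For any w^0 ∈ B̄(w*, δ) define the iterates w^{t+1} = w^t − (H(αw* + (1−α)w^t))^{-1}(∇f(w^t)). Then every iterate remains in B̄(w*, δ), and for every T ≥ 0, ‖w^T − w*‖ ≤ (q‖w^0 − w*‖)^{2^T − 1} ‖w^0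 − w*‖; in particular the convergence to w* is quadratic (super-exponential teachability). -/
open intervalIntegral

set_option maxHeartbeats 1000000

lemma abs_integral_aux (β : ℝ) (hβ0 : 0 ≤ β) (hβ1 : β ≤ 1) :
    ∫ s in (0:ℝ)..1, |β - s| = β ^ 2 / 2 + (1 - β) ^ 2 / 2 := by
  have h1 : ∫ s in (0:ℝ)..β, |β - s| = β ^ 2 / 2 := by
    rw [intervalIntegral.integral_congr (g := fun s => β - s)
      (fun s hs => by
        rw [Set.uIcc_of_le hβ0] at hs
        exact abs_of_nonneg (by linarith [hs.1, hs.2]))]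
    rw [intervalIntegral.integral_sub (intervalIntegrable_const) (continuous_id'.intervalIntegrable _ _)]
    simp [integral_id]
    ring
  have h2 : ∫ s in β..(1:ℝ), |β - s| = (1 - β) ^ 2 / 2 := by
    rw [intervalIntegral.integral_congr (g := fun s => s - β)
      (fun s hs => by
        rw [Set.uIcc_of_le hβ1] at hs
        rw [abs_sub_comm]
        exact abs_of_nonneg (by linarith [hs.1, hs.2]))]
    rw [intervalIntegral.integral_sub (continuous_id'.intervalIntegrable _ _) intervalIntegrable_const]
    simp [integral_id]
    ring
  have hi : ∀ a b : ℝ, IntervalIntegrable (fun s => |β - s|) MeasureTheory.volume a b :=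
    fun a b => ((continuous_const.sub continuous_id).abs).intervalIntegrable a b
  rw [← intervalIntegral.integral_add_adjacent_intervals (hi 0 β) (hi β 1), h1, h2]

/-- **Super-exponential teachability (Theorem 3).** With `H(u)` the Hessian of `f` at `u`
(the derivative of the gradient map, assumed `L`-Lipschitz in operator norm on the closed
ball `B̄(w*, δ)`), `∇f(w*) = 0`, `α ∈ [0,1]`, each operator `H(αw* + (1−α)u)` invertible
with inverse of norm at most `μ`, `q = μL((1−α)² + α²)/2` and `qδ < 1`, the generalized
Newton iterates `w^{t+1} = w^t − (H(αw* + (1−α)w^t))⁻¹(∇f(w^t))` started from any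
`w^0 ∈ B̄(w*, δ)` remain in the ball and satisfy
`‖w^T − w*‖ ≤ (q‖w^0 − w*‖)^(2^T − 1) ‖w^0 − w*‖` (quadratic convergence). -/
theorem super_exponential_teachability
    {E : Type*} [NormedAddCommGroup E] [InnerProductSpace ℝ E] [FiniteDimensional ℝ E]
    (δ : ℝ) (hδ : 0 < δ) (wstar : E) (f : E → ℝ)
    (H : E → E →L[ℝ] E)
    (hH : ∀ u ∈ Metric.closedBall wstar δ, HasFDerivAt (gradient f) (H u) u)
    (hcont : ContinuousOn H (Metric.closedBall wstar δ))
    (hgrad0 : gradient f wstar = 0)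
    (L : ℝ)
    (hLip : ∀ u ∈ Metric.closedBall wstar δ, ∀ v ∈ Metric.closedBall wstar δ,
      ‖H u - H v‖ ≤ L * ‖u - v‖)
    (α : ℝ) (hα : α ∈ Set.Icc (0 : ℝ) 1)
    (Hinv : E → E →L[ℝ] E)
    (hinv₁ : ∀ u ∈ Metric.closedBall wstar δ,
      (Hinv u).comp (H (α • wstar + (1 - α) • u)) = ContinuousLinearMap.id ℝ E)
    (hinv₂ : ∀ u ∈ Metric.closedBall wstar δ,
      (H (α • wstar + (1 - α) • u)).comp (Hinv u) = ContinuousLinearMap.id ℝ E)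
    (μ : ℝ) (hμ : ∀ u ∈ Metric.closedBall wstar δ, ‖Hinv u‖ ≤ μ)
    (q : ℝ) (hq : q = μ * L * ((1 - α) ^ 2 + α ^ 2) / 2) (hqδ : q * δ < 1)
    (w0 : E) (hw0mem : w0 ∈ Metric.closedBall wstar δ)
    (w : ℕ → E) (hw0 : w 0 = w0)
    (hwS : ∀ t : ℕ, w (t + 1) = w t - Hinv (w t) (gradient f (w t))) :
    (∀ t : ℕ, w t ∈ Metric.closedBall wstar δ) ∧
      ∀ T : ℕ, ‖w T - wstar‖ ≤
        (q * ‖w0 - wstar‖) ^ (2 ^ T - 1) * ‖w0 - wstar‖ := by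
  rcases subsingleton_or_nontrivial E with hE | hE
  · constructor
    · intro t
      have : w t = wstar := Subsingleton.elim _ _
      simp [Metric.mem_closedBall, this, hδ.le]
    · intro T
      have h0 : w0 - wstar = 0 := Subsingleton.elim _ _
      have hT : w T - wstar = 0 := Subsingleton.elim _ _
      simp [h0, hT]
  -- nontrivial case
  obtain ⟨hα0, hα1⟩ := hα
  -- q ≥ 0
  have hμ0 : 0 ≤ μ := le_trans (norm_nonneg _) (hμ wstar (Metric.mem_closedBall_self hδ.le))
  have hL0 : 0 ≤ L := by
    obtain ⟨x, hx⟩ := exists_ne (0 : E)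
    have hxn : ‖x‖ ≠ 0 := norm_ne_zero_iff.mpr hx
    set v := wstar + (δ / ‖x‖) • x with hv
    have hvmem : v ∈ Metric.closedBall wstar δ := by
      rw [Metric.mem_closedBall, dist_eq_norm, hv]
      have : wstar + (δ / ‖x‖) • x - wstar = (δ / ‖x‖) • x := by abel
      rw [this, norm_smul, Real.norm_eq_abs, abs_of_nonneg (by positivity)]
      rw [div_mul_cancel₀ _ hxn]
    have h1 : (0:ℝ) ≤ L * ‖wstar - v‖ :=
      le_trans (norm_nonneg _) (hLip wstar (Metric.mem_closedBall_self hδ.le) v hvmem)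
    have h2 : ‖wstar - v‖ = δ := by
      rw [hv]
      have : wstar - (wstar + (δ / ‖x‖) • x) = -((δ / ‖x‖) • x) := by abel
      rw [this, norm_neg, norm_smul, Real.norm_eq_abs, abs_of_nonneg (by positivity),
        div_mul_cancel₀ _ hxn]
    rw [h2] at h1
    by_contra hL
    push_neg at hL
    nlinarith
  have hq0 : 0 ≤ q := by
    rw [hq]
    have h1 : (0:ℝ) ≤ (1 - α) ^ 2 + α ^ 2 := by positivity
    have := mul_nonneg (mul_nonneg hμ0 hL0) h1
    linarith
  -- key one-step estimate
  have key : ∀ u ∈ Metric.closedBall wstar δ,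
      ‖u - Hinv u (gradient f u) - wstar‖ ≤ q * ‖u - wstar‖ ^ 2 := by
    intro u hu
    set e := u - wstar with he
    have heδ : ‖e‖ ≤ δ := by rwa [Metric.mem_closedBall, dist_eq_norm] at hu
    set p := α • wstar + (1 - α) • u with hp
    have hpe : p - wstar = (1 - α) • e := by rw [hp, he]; module
    have hpmem : p ∈ Metric.closedBall wstar δ := by
      rw [Metric.mem_closedBall, dist_eq_norm, hpe, norm_smul, Real.norm_eq_abs,
        abs_of_nonneg (by linarith)]
      calc (1 - α) * ‖e‖ ≤ 1 * ‖e‖ :=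
            mul_le_mul_of_nonneg_right (by linarith) (norm_nonneg _)
        _ ≤ δ := by rw [one_mul]; exact heδ
    have hxmem : ∀ s ∈ Set.Icc (0:ℝ) 1, wstar + s • e ∈ Metric.closedBall wstar δ := by
      intro s hs
      rw [Metric.mem_closedBall, dist_eq_norm]
      have h1 : wstar + s • e - wstar = s • e := by abel
      rw [h1, norm_smul, Real.norm_eq_abs, abs_of_nonneg hs.1]
      calc s * ‖e‖ ≤ 1 * ‖e‖ := mul_le_mul_of_nonneg_right hs.2 (norm_nonneg _)
        _ ≤ δ := by rw [one_mul]; exact heδ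
    have hderiv : ∀ s ∈ Set.uIcc (0:ℝ) 1,
        HasDerivAt (fun s : ℝ => gradient f (wstar + s • e)) ((H (wstar + s • e)) e) s := by
      intro s hs
      rw [Set.uIcc_of_le zero_le_one] at hs
      have h1 : HasDerivAt (fun s : ℝ => wstar + s • e) e s := by
        simpa using ((hasDerivAt_id s).smul_const e).const_add wstar
      exact (hH _ (hxmem s hs)).comp_hasDerivAt s h1
    have hcg : ContinuousOn (fun s : ℝ => (H (wstar + s • e)) e) (Set.uIcc (0:ℝ) 1) := by
      rw [Set.uIcc_of_le zero_le_one]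
      apply ContinuousOn.clm_apply _ continuousOn_const
      exact hcont.comp (Continuous.continuousOn (by continuity)) hxmem
    have hint : IntervalIntegrable (fun s : ℝ => (H (wstar + s • e)) e)
        MeasureTheory.volume 0 1 := hcg.intervalIntegrable
    have hFTC : ∫ s in (0:ℝ)..1, (H (wstar + s • e)) e = gradient f u := by
      rw [intervalIntegral.integral_eq_sub_of_hasDerivAt hderiv hint]
      have h1 : wstar + (1:ℝ) • e = u := by rw [he]; module
      have h0 : wstar + (0:ℝ) • e = wstar := by module
      rw [h1, h0, hgrad0, sub_zero]
    have hid : u - Hinv u (gradient f u) - wstar = Hinv u ((H p) e - gradient f u) := by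
      have h1 : Hinv u ((H p) e) = e := by
        have h2 := hinv₁ u hu
        have h3 : ((Hinv u).comp (H p)) e = (ContinuousLinearMap.id ℝ E) e := by rw [h2]
        simpa using h3
      rw [map_sub, h1, he]
      abel
    have hbound : ∀ s ∈ Set.Icc (0:ℝ) 1,
        ‖(H p) e - (H (wstar + s • e)) e‖ ≤ L * ‖e‖ ^ 2 * |(1 - α) - s| := by
      intro s hs
      have hsm := hxmem s hs
      have h1 : (H p) e - (H (wstar + s • e)) e = (H p - H (wstar + s • e)) e := rfl
      rw [h1]
      calc ‖(H p - H (wstar + s • e)) e‖ ≤ ‖H p - H (wstar + s • e)‖ * ‖e‖ :=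
            ContinuousLinearMap.le_opNorm _ _
        _ ≤ (L * ‖p - (wstar + s • e)‖) * ‖e‖ :=
            mul_le_mul_of_nonneg_right (hLip _ hpmem _ hsm) (norm_nonneg _)
        _ = L * ‖e‖ ^ 2 * |(1 - α) - s| := by
            have h2 : p - (wstar + s • e) = ((1 - α) - s) • e := by rw [hp, he]; module
            rw [h2, norm_smul, Real.norm_eq_abs]
            ring
    have hnorm : ‖(H p) e - gradient f u‖ ≤ L * ‖e‖ ^ 2 * (((1 - α) ^ 2 + α ^ 2) / 2) := by
      have hdiff : (H p) e - gradient f u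
          = ∫ s in (0:ℝ)..1, ((H p) e - (H (wstar + s • e)) e) := by
        rw [intervalIntegral.integral_sub intervalIntegrable_const hint, hFTC]
        simp
      rw [hdiff]
      have hib : IntervalIntegrable (fun s : ℝ => L * ‖e‖ ^ 2 * |(1 - α) - s|)
          MeasureTheory.volume 0 1 :=
        (continuous_const.mul ((continuous_const.sub continuous_id).abs)).intervalIntegrable _ _
      calc ‖∫ s in (0:ℝ)..1, ((H p) e - (H (wstar + s • e)) e)‖
          ≤ ∫ s in (0:ℝ)..1, ‖(H p) e - (H (wstar + s • e)) e‖ :=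
            intervalIntegral.norm_integral_le_integral_norm zero_le_one
        _ ≤ ∫ s in (0:ℝ)..1, L * ‖e‖ ^ 2 * |(1 - α) - s| :=
            intervalIntegral.integral_mono_on zero_le_one
              ((intervalIntegrable_const.sub hint).norm) hib hbound
        _ = L * ‖e‖ ^ 2 * (((1 - α) ^ 2 + α ^ 2) / 2) := by
            rw [intervalIntegral.integral_const_mul,
              abs_integral_aux (1 - α) (by linarith) (by linarith)]
            ring
    calc ‖u - Hinv u (gradient f u) - wstar‖ = ‖Hinv u ((H p) e - gradient f u)‖ := by rw [hid]
      _ ≤ ‖Hinv u‖ * ‖(H p) e - gradient f u‖ := ContinuousLinearMap.le_opNorm _ _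
      _ ≤ μ * (L * ‖e‖ ^ 2 * (((1 - α) ^ 2 + α ^ 2) / 2)) :=
          mul_le_mul (hμ u hu) hnorm (norm_nonneg _) hμ0
      _ = q * ‖e‖ ^ 2 := by rw [hq]; ring
  -- induction
  set r := ‖w0 - wstar‖ with hr
  have hr0 : 0 ≤ r := norm_nonneg _
  have hrδ : r ≤ δ := by rw [hr, ← dist_eq_norm]; exact hw0mem
  have main : ∀ t : ℕ, w t ∈ Metric.closedBall wstar δ ∧
      ‖w t - wstar‖ ≤ (q * r) ^ (2 ^ t - 1) * r := by
    intro t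
    induction t with
    | zero => exact ⟨hw0 ▸ hw0mem, by simp [hw0, hr]⟩
    | succ t ih =>
      obtain ⟨hmem, hbd⟩ := ih
      have hwt : ‖w t - wstar‖ ≤ δ := by rwa [Metric.mem_closedBall, dist_eq_norm] at hmem
      have hstep : ‖w (t + 1) - wstar‖ ≤ q * ‖w t - wstar‖ ^ 2 := by
        rw [hwS t]; exact key (w t) hmem
      have hnn := norm_nonneg (w t - wstar)
      have hmem' : w (t + 1) ∈ Metric.closedBall wstar δ := by
        rw [Metric.mem_closedBall, dist_eq_norm]
        calc ‖w (t + 1) - wstar‖ ≤ q * ‖w t - wstar‖ ^ 2 := hstep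
          _ ≤ (q * δ) * ‖w t - wstar‖ := by nlinarith [mul_nonneg (mul_nonneg hq0 hnn) (sub_nonneg.2 hwt)]
          _ ≤ 1 * δ := by nlinarith [mul_le_mul_of_nonneg_left hwt (mul_nonneg hq0 hδ.le), mul_nonneg hq0 hδ.le]
          _ = δ := one_mul δ
      refine ⟨hmem', ?_⟩
      have hb0 : 0 ≤ (q * r) ^ (2 ^ t - 1) * r := by positivity
      have hexp : 2 ^ (t + 1) - 1 = 2 * (2 ^ t - 1) + 1 := by
        have h1 : 1 ≤ 2 ^ t := Nat.one_le_two_pow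
        have h2 : 2 ^ (t + 1) = 2 * 2 ^ t := by rw [pow_succ]; ring
        omega
      calc ‖w (t + 1) - wstar‖ ≤ q * ‖w t - wstar‖ ^ 2 := hstep
        _ ≤ q * ((q * r) ^ (2 ^ t - 1) * r) ^ 2 :=
            mul_le_mul_of_nonneg_left (pow_le_pow_left₀ hnn hbd 2) hq0
        _ = (q * r) ^ (2 ^ (t + 1) - 1) * r := by rw [hexp]; ring
  exact ⟨fun t => (main t).1, fun T => (main T).2⟩
end

section
/- Closed-form optimal synthesized label for the least-squares learner (Equation 3). Let E be a real inner product space, x ∈ E with x ≠ 0, η > 0, and w, w* ∈ E. For a synthesized scalar label y ∈ ℝ, the least-squares gradient step is w⁺(y) = w − η(⟨w, x⟩ − y)x, and the teacher's objective is F(y) = ‖w⁺(y) − w*‖². Then F is uniquely minimized over ℝ at y* = (1 − λ)⟨w, x⟩ + λ⟨w*, x⟩, where λ = 1/(η‖x‖²); that is, F(y*) ≤ F(y) for all y ∈ ℝ, with equality only at y = y*. In particular, the optimal synthesized label is a convex-type combination of the learner's current prediction ⟨w, x⟩ and the optimal model's prediction ⟨w*, x⟩. -/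
open scoped RealInnerProductSpace

/-- **Closed-form optimal synthesized label for the least-squares learner (Equation 3).**
For the least-squares gradient step `w⁺(y) = w − η(⟨w,x⟩ − y)x` and teacher objective
`F(y) = ‖w⁺(y) − w*‖²`, the unique minimizer over `y ∈ ℝ` is
`y* = (1 − λ)⟨w,x⟩ + λ⟨w*,x⟩` with `λ = 1/(η‖x‖²)`. -/
theorem lsr_optimal_synthesized_label
    {E : Type*} [NormedAddCommGroup E] [InnerProductSpace ℝ E]
    (x : E) (hx : x ≠ 0) (η : ℝ) (hη : 0 < η) (w wstar : E)
    (F : ℝ → ℝ)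
    (hF : ∀ y : ℝ, F y = ‖(w - (η * (⟪w, x⟫ - y)) • x) - wstar‖ ^ 2)
    (lam ystar : ℝ)
    (hlam : lam = 1 / (η * ‖x‖ ^ 2))
    (hystar : ystar = (1 - lam) * ⟪w, x⟫ + lam * ⟪wstar, x⟫) :
    (∀ y : ℝ, F ystar ≤ F y) ∧ ∀ y : ℝ, F y = F ystar → y = ystar := by
  have hxn : (0:ℝ) < ‖x‖ ^ 2 := pow_pos (norm_pos_iff.mpr hx) 2
  have hd : η * ‖x‖ ^ 2 ≠ 0 := ne_of_gt (mul_pos hη hxn)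
  have key : ∀ y : ℝ, F y = F ystar + (η * ‖x‖)^2 * (y - ystar)^2 := by
    intro y
    have expand : ∀ z : ℝ, F z =
        ‖w - wstar‖^2 - 2 * ((η * (⟪w, x⟫ - z)) * ⟪w - wstar, x⟫)
          + (η * (⟪w, x⟫ - z))^2 * ‖x‖^2 := by
      intro z
      rw [hF z]
      have : w - (η * (⟪w, x⟫ - z)) • x - wstar
          = (w - wstar) - (η * (⟪w, x⟫ - z)) • x := by abel
      rw [this, @norm_sub_sq_real, real_inner_smul_right, norm_smul]
      simp only [Real.norm_eq_abs, abs_mul, mul_pow, sq_abs]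
      try ring
    rw [expand y, expand ystar]
    have hinn : ⟪w - wstar, x⟫ = ⟪w, x⟫ - ⟪wstar, x⟫ := by
      simp [inner_sub_left]
    rw [hinn, hystar, hlam]
    field_simp
    ring
  constructor
  · intro y
    rw [key y]
    nlinarith [sq_nonneg ((η*‖x‖)^2 * (y - ystar)), sq_nonneg (y - ystar), sq_nonneg (η*‖x‖)]
  · intro y hy
    rw [key y] at hy
    have h2 : (η * ‖x‖)^2 * (y - ystar)^2 = 0 := by linarith
    have hne : (η * ‖x‖)^2 ≠ 0 := pow_ne_zero 2 (mul_ne_zero hη.ne' (norm_ne_zero_iff.mpr hx))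
    have := (mul_eq_zero.mp h2).resolve_left hne
    have : y - ystar = 0 := by
      exact pow_eq_zero_iff (by norm_num) |>.mp this
    linarith
end
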